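/- Let G = (V, E) be a connected regular graph of even order n, and let {V₁, V₂} be a partition of V with |V₁| = |V₂| = n/2. If V₁ is a clique of G or a coclique (independent set) of G, then G is class 1. -/

import Mathlib

open SimpleGraph

/-- The chromatic index (edge-chromatic number) of a graph, defined as the
chromatic number of its line graph. -/
noncomputable def edgeChromaticNumber {V : Type*} (G : SimpleGraph V) : ℕ∞ :=
  G.lineGraph.chromaticNumber

/-- A graph is 1-factorable if its edge set can be partitioned into
perfect matchings (1-factors). -/
def IsOneFactorable {V : Type*} (G : SimpleGraph V) : Prop :=
  ∃ F : Set G.Subgraph, (∀ M ∈ F, M.IsPerfectMatching) ∧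
    ∀ e ∈ G.edgeSet, ∃! M, M ∈ F ∧ e ∈ M.edgeSet

/-- A regular graph is class 1 if its chromatic index equals its degree. -/
def IsClass1 {V : Type*} (G : SimpleGraph V) : Prop :=
  ∃ k : ℕ, (∀ v, Nat.card (G.neighborSet v) = k) ∧ edgeChromaticNumber G = k

section Auxiliary

variable {V : Type*}

private lemma inter_eq_filter [Fintype V] [DecidableEq V] (G : SimpleGraph V)
    [DecidableRel G.Adj] (T : Finset V) (a : V) :
    G.neighborFinset a ∩ T = T.filter (fun b => G.Adj a b) := by
  ext b; simp [Finset.mem_filter, and_comm]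

private lemma cross_sum [Fintype V] [DecidableEq V] (G : SimpleGraph V) [DecidableRel G.Adj]
    (S T : Finset V) :
    ∑ a ∈ S, (G.neighborFinset a ∩ T).card = ∑ b ∈ T, (G.neighborFinset b ∩ S).card := by
  simp only [inter_eq_filter, Finset.card_filter]
  rw [Finset.sum_comm]
  congr 1; ext b; congr 1; ext a; simp [G.adj_comm]

private lemma sum_eq_all {ι : Type*} [DecidableEq ι] (s : Finset ι) (f : ι → ℕ) (t : ℕ)
    (h : ∀ b ∈ s, t ≤ f b) (hsum : ∑ b ∈ s, f b = s.card * t) :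
    ∀ b ∈ s, f b = t := by
  intro b hb
  by_contra hne
  have hlt : t < f b := lt_of_le_of_ne (h b hb) (Ne.symm hne)
  have h1 : ∑ x ∈ s.erase b, f x ≥ (s.erase b).card * t := by
    calc (s.erase b).card * t = ∑ _x ∈ s.erase b, t := by rw [Finset.sum_const, smul_eq_mul]
    _ ≤ ∑ x ∈ s.erase b, f x := Finset.sum_le_sum (fun x hx => h x (Finset.mem_of_mem_erase hx))
  have h2 : ∑ x ∈ s, f x = f b + ∑ x ∈ s.erase b, f x := (Finset.add_sum_erase s f hb).symm
  have hcard : (s.erase b).card = s.card - 1 := Finset.card_erase_of_mem hb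
  have hpos : 1 ≤ s.card := Finset.card_pos.mpr ⟨b, hb⟩
  rw [hcard] at h1
  have ht' : t ≤ s.card * t := Nat.le_mul_of_pos_left t hpos
  have : s.card * t = (s.card - 1) * t + t := by rw [Nat.sub_one_mul]; omega
  omega

private lemma sum_eq_all_le {ι : Type*} [DecidableEq ι] (s : Finset ι) (f : ι → ℕ) (t : ℕ)
    (h : ∀ b ∈ s, f b ≤ t) (hsum : ∑ b ∈ s, f b = s.card * t) :
    ∀ b ∈ s, f b = t := by
  intro b hb
  by_contra hne
  have hlt : f b < t := lt_of_le_of_ne (h b hb) hne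
  have h1 : ∑ x ∈ s.erase b, f x ≤ (s.erase b).card * t := by
    calc ∑ x ∈ s.erase b, f x ≤ ∑ _x ∈ s.erase b, t :=
          Finset.sum_le_sum (fun x hx => h x (Finset.mem_of_mem_erase hx))
    _ = (s.erase b).card * t := by rw [Finset.sum_const, smul_eq_mul]
  have h2 : ∑ x ∈ s, f x = f b + ∑ x ∈ s.erase b, f x := (Finset.add_sum_erase s f hb).symm
  have hcard : (s.erase b).card = s.card - 1 := Finset.card_erase_of_mem hb
  have hpos : 1 ≤ s.card := Finset.card_pos.mpr ⟨b, hb⟩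
  rw [hcard] at h1
  have ht' : t ≤ s.card * t := Nat.le_mul_of_pos_left t hpos
  have : s.card * t = (s.card - 1) * t + t := by rw [Nat.sub_one_mul]; omega
  omega

private lemma deg_split [Fintype V] [DecidableEq V] (G : SimpleGraph V) [DecidableRel G.Adj]
    (A : Finset V) (v : V) :
    (G.neighborFinset v ∩ A).card + (G.neighborFinset v ∩ Aᶜ).card = G.degree v := by
  rw [← G.card_neighborFinset_eq_degree, ← Finset.card_union_of_disjoint,
    ← Finset.inter_union_distrib_left, Finset.union_compl, Finset.inter_univ]
  exact Finset.disjoint_of_subset_left (Finset.inter_subset_right)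
    (Finset.disjoint_of_subset_right Finset.inter_subset_right disjoint_compl_right)

private lemma walk_side [DecidableEq V] {G : SimpleGraph V} {A : Finset V}
    (h : ∀ v w, G.Adj v w → (v ∈ A ↔ w ∈ A)) {a b : V} (p : G.Walk a b) :
    a ∈ A ↔ b ∈ A := by
  induction p with
  | nil => exact Iff.rfl
  | cons h' _ ih => exact (h _ _ h').trans ih

private lemma exists_matching [Fintype V] [DecidableEq V] (G : SimpleGraph V)
    [DecidableRel G.Adj] (A : Finset V) (t : ℕ) (ht : 0 < t)
    (hcross : ∀ v w, G.Adj v w → (v ∈ A ↔ w ∉ A))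
    (hAcard : 2 * A.card = Fintype.card V)
    (hreg : ∀ v, G.degree v = t) :
    ∃ σ : V → V, (∀ v, σ (σ v) = v) ∧ (∀ v, G.Adj v (σ v)) := by
  have hall : ∀ (s : Finset ↥A), s.card ≤ (s.biUnion fun a => G.neighborFinset ↑a).card := by
    intro s
    set T := s.biUnion fun a => G.neighborFinset ↑a with hT
    set S := s.image (fun a : ↥A => (a : V)) with hS
    have hScard : S.card = s.card := Finset.card_image_of_injective _ Subtype.val_injective
    have hsub : ∀ a ∈ S, G.neighborFinset a ⊆ T := by
      intro a ha
      rw [hS, Finset.mem_image] at ha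
      obtain ⟨a', ha', rfl⟩ := ha
      rw [hT]
      exact Finset.subset_biUnion_of_mem (fun a : ↥A => G.neighborFinset ↑a) ha'
    have h1 : ∀ a ∈ S, (G.neighborFinset a ∩ T).card = t := by
      intro a ha
      rw [Finset.inter_eq_left.mpr (hsub a ha), card_neighborFinset_eq_degree, hreg]
    have h2 : S.card * t ≤ T.card * t := by
      calc S.card * t = ∑ a ∈ S, (G.neighborFinset a ∩ T).card := by
            rw [Finset.sum_congr rfl h1, Finset.sum_const, smul_eq_mul]
        _ = ∑ b ∈ T, (G.neighborFinset b ∩ S).card := cross_sum G S T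
        _ ≤ ∑ _b ∈ T, t := Finset.sum_le_sum (fun b _ => by
              rw [← hreg b, ← card_neighborFinset_eq_degree]
              exact Finset.card_le_card Finset.inter_subset_left)
        _ = T.card * t := by rw [Finset.sum_const, smul_eq_mul]
    have := Nat.le_of_mul_le_mul_right h2 ht
    omega
  obtain ⟨f, hfinj, hf⟩ := (Finset.all_card_le_biUnion_card_iff_exists_injective
    (fun a : ↥A => G.neighborFinset ↑a)).mp hall
  have hadj : ∀ a : ↥A, G.Adj ↑a (f a) := fun a => (mem_neighborFinset _ _ _).mp (hf a)
  have hfB : ∀ a : ↥A, f a ∈ Aᶜ := by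
    intro a
    rw [Finset.mem_compl]
    exact (hcross _ _ (hadj a)).mp a.2
  let f' : ↥A → ↥(Aᶜ : Finset V) := fun a => ⟨f a, hfB a⟩
  have hf'inj : Function.Injective f' := by
    intro a b hab
    exact hfinj (congrArg Subtype.val hab)
  have hcards : Fintype.card ↥A = Fintype.card ↥(Aᶜ : Finset V) := by
    rw [Fintype.card_coe, Fintype.card_coe, Finset.card_compl]
    have := Finset.card_le_univ A
    omega
  have hbij : Function.Bijective f' :=
    (Fintype.bijective_iff_injective_and_card f').mpr ⟨hf'inj, hcards⟩
  let eqv := Equiv.ofBijective f' hbij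
  have heqv : ∀ a : ↥A, (eqv a : V) = f a := fun a => rfl
  refine ⟨fun v => if h : v ∈ A then (eqv ⟨v, h⟩ : V)
    else (eqv.symm ⟨v, Finset.mem_compl.mpr h⟩ : V), ?_, ?_⟩
  · intro v
    dsimp only
    by_cases h : v ∈ A
    · rw [dif_pos h]
      have h2 : (eqv ⟨v, h⟩ : V) ∉ A := Finset.mem_compl.mp (eqv ⟨v, h⟩).2
      rw [dif_neg h2]
      have : (⟨(eqv ⟨v, h⟩ : V), Finset.mem_compl.mpr h2⟩ : ↥(Aᶜ : Finset V)) = eqv ⟨v, h⟩ :=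
        Subtype.ext rfl
      rw [this, Equiv.symm_apply_apply]
    · rw [dif_neg h]
      have h2 : (eqv.symm ⟨v, Finset.mem_compl.mpr h⟩ : V) ∈ A :=
        (eqv.symm ⟨v, Finset.mem_compl.mpr h⟩).2
      rw [dif_pos h2]
      have : (⟨(eqv.symm ⟨v, Finset.mem_compl.mpr h⟩ : V), h2⟩ : ↥A) =
          eqv.symm ⟨v, Finset.mem_compl.mpr h⟩ := Subtype.ext rfl
      rw [this, Equiv.apply_symm_apply]
  · intro v
    dsimp only
    by_cases h : v ∈ A
    · rw [dif_pos h]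
      exact hadj ⟨v, h⟩
    · rw [dif_neg h]
      set a := eqv.symm ⟨v, Finset.mem_compl.mpr h⟩ with ha
      have : f a = v := by
        have : (eqv a : V) = v := by rw [ha, Equiv.apply_symm_apply]
        rwa [heqv] at this
      rw [← this] at *
      exact (hadj a).symm

private lemma bip_coloring : ∀ (t : ℕ) {V : Type*} [Fintype V] [DecidableEq V]
    (G : SimpleGraph V) [DecidableRel G.Adj] (A : Finset V),
    (∀ v w, G.Adj v w → (v ∈ A ↔ w ∉ A)) → (2 * A.card = Fintype.card V) →
    (∀ v, G.degree v = t) →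
    ∃ c : Sym2 V → ℕ, (∀ ⦃v w⦄, G.Adj v w → c s(v, w) < t) ∧
      (∀ ⦃v w w'⦄, G.Adj v w → G.Adj v w' → w ≠ w' → c s(v, w) ≠ c s(v, w')) := by
  intro t
  induction t with
  | zero =>
    intro V _ _ G _ A hcross hA hreg
    refine ⟨fun _ => 0, ?_, ?_⟩
    · intro v w h
      have h1 : G.neighborFinset v = ∅ := Finset.card_eq_zero.mp (hreg v)
      have h2 : w ∈ G.neighborFinset v := (G.mem_neighborFinset v w).mpr h
      rw [h1] at h2
      exact absurd h2 (Finset.notMem_empty w)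
    · intro v w w' h h' hne
      have h1 : G.neighborFinset v = ∅ := Finset.card_eq_zero.mp (hreg v)
      have h2 : w ∈ G.neighborFinset v := (G.mem_neighborFinset v w).mpr h
      rw [h1] at h2
      exact absurd h2 (Finset.notMem_empty w)
  | succ s ih =>
    intro V _ _ G _ A hcross hA hreg
    classical
    obtain ⟨σ, hσinv, hσadj⟩ := exists_matching G A (s+1) (Nat.succ_pos s) hcross hA hreg
    have hσinj : Function.Injective σ := Function.LeftInverse.injective hσinv
    let G' : SimpleGraph V :=
      { Adj := fun v w => G.Adj v w ∧ w ≠ σ v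
        symm := Std.Symm.mk <| by
          intro v w ⟨h1, h2⟩
          refine ⟨h1.symm, fun hv => h2 ?_⟩
          rw [hv, hσinv]
        loopless := ⟨fun v h => G.loopless.irrefl v h.1⟩ }
    have hG'adj : ∀ v w, G'.Adj v w ↔ G.Adj v w ∧ w ≠ σ v := fun _ _ => Iff.rfl
    letI : DecidableRel G'.Adj := Classical.decRel _
    have hN' : ∀ v, G'.neighborFinset v = (G.neighborFinset v).erase (σ v) := by
      intro v
      ext w
      rw [mem_neighborFinset, Finset.mem_erase, mem_neighborFinset, hG'adj]
      tauto
    have hdeg' : ∀ v, G'.degree v = s := by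
      intro v
      rw [← card_neighborFinset_eq_degree, hN',
        Finset.card_erase_of_mem ((G.mem_neighborFinset v (σ v)).mpr (hσadj v)),
        card_neighborFinset_eq_degree, hreg]
      omega
    obtain ⟨c', hlt', hprop'⟩ := ih G' A (fun v w h => hcross v w h.1) hA hdeg'
    have hkey : ∀ v w, s(v, w) ∈ {e : Sym2 V | ∃ u, e = s(u, σ u)} ↔ w = σ v := by
      intro v w
      constructor
      · rintro ⟨u, he⟩
        rw [Sym2.eq_iff] at he
        rcases he with ⟨rfl, rfl⟩ | ⟨h1, rfl⟩
        · rfl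
        · rw [h1, hσinv]
      · intro h
        exact ⟨v, by rw [h]⟩
    refine ⟨fun e => if e ∈ {e : Sym2 V | ∃ u, e = s(u, σ u)} then s else c' e, ?_, ?_⟩
    · intro v w h
      dsimp only
      by_cases hm : s(v, w) ∈ {e : Sym2 V | ∃ u, e = s(u, σ u)}
      · rw [if_pos hm]; omega
      · rw [if_neg hm]
        have : G'.Adj v w := ⟨h, fun hw => hm ((hkey v w).mpr hw)⟩
        have := hlt' this
        omega
    · intro v w w' h h' hne
      dsimp only
      by_cases hm : s(v, w) ∈ {e : Sym2 V | ∃ u, e = s(u, σ u)} <;>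
        by_cases hm' : s(v, w') ∈ {e : Sym2 V | ∃ u, e = s(u, σ u)}
      · exact absurd (((hkey v w).mp hm).trans ((hkey v w').mp hm').symm) hne
      · rw [if_pos hm, if_neg hm']
        have : G'.Adj v w' := ⟨h', fun hw => hm' ((hkey v w').mpr hw)⟩
        exact (hlt' this).ne'
      · rw [if_neg hm, if_pos hm']
        have : G'.Adj v w := ⟨h, fun hw => hm ((hkey v w).mpr hw)⟩
        exact (hlt' this).ne
      · rw [if_neg hm, if_neg hm']
        exact hprop' ⟨h, fun hw => hm ((hkey v w).mpr hw)⟩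
          ⟨h', fun hw => hm' ((hkey v w').mpr hw)⟩ hne

private lemma pair_coloring [Fintype V] [DecidableEq V] (G : SimpleGraph V)
    (A : Finset V) (hm : 0 < A.card) (σ : V → V)
    (hσinv : ∀ v, σ (σ v) = v) (hσA : ∀ v, v ∈ A ↔ σ v ∉ A)
    (hadj : ∀ v w, G.Adj v w ↔ (((v ∈ A) ↔ (w ∈ A)) ∧ v ≠ w) ∨ w = σ v) :
    ∃ c : Sym2 V → ℕ, (∀ ⦃v w⦄, G.Adj v w → c s(v, w) < A.card) ∧
      (∀ ⦃v w w'⦄, G.Adj v w → G.Adj v w' → w ≠ w' → c s(v, w) ≠ c s(v, w')) := by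
  set m := A.card with hmdef
  haveI : NeZero m := ⟨hm.ne'⟩
  have hcard : Fintype.card ↥A = Fintype.card (ZMod m) := by
    rw [Fintype.card_coe, ZMod.card]
  let eA : ↥A ≃ ZMod m := Fintype.equivOfCardEq hcard
  have hmem : ∀ v : V, v ∉ A → σ v ∈ A := fun v h =>
    not_not.mp (fun h2 => h ((hσA v).mpr h2))
  set label : V → ZMod m := fun v => if h : v ∈ A then eA ⟨v, h⟩ else eA ⟨σ v, hmem v h⟩
    with hlabel
  have hlA : ∀ (v) (h : v ∈ A), label v = eA ⟨v, h⟩ := fun v h => dif_pos h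
  have hlB : ∀ (v) (h : v ∉ A), label v = eA ⟨σ v, hmem v h⟩ := fun v h => dif_neg h
  have hinjA : ∀ v w, v ∈ A → w ∈ A → label v = label w → v = w := by
    intro v w hv hw h
    rw [hlA v hv, hlA w hw] at h
    exact congrArg Subtype.val (eA.injective h)
  have hinjB : ∀ v w, v ∉ A → w ∉ A → label v = label w → v = w := by
    intro v w hv hw h
    rw [hlB v hv, hlB w hw] at h
    have : σ v = σ w := congrArg Subtype.val (eA.injective h)
    calc v = σ (σ v) := (hσinv v).symm
    _ = σ (σ w) := by rw [this]
    _ = w := hσinv w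
  have hlmix : ∀ v w, v ∈ A → w ∉ A → label v = label w → v = σ w := by
    intro v w hv hw h
    rw [hlA v hv, hlB w hw] at h
    exact congrArg Subtype.val (eA.injective h)
  have key : ∀ v w w', G.Adj v w → G.Adj v w' → w ≠ w' → label w ≠ label w' := by
    intro v w w' h h' hne hl
    by_cases hw : w ∈ A <;> by_cases hw' : w' ∈ A
    · exact hne (hinjA w w' hw hw' hl)
    · have hww' : w = σ w' := hlmix w w' hw hw' hl
      by_cases hv : v ∈ A
      · have : w' = σ v := by
          rcases (hadj v w').mp h' with ⟨hs, _⟩ | hs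
          · exact absurd (hs.mp hv) hw'
          · exact hs
        have : w = v := by rw [hww', this, hσinv]
        exact G.ne_of_adj h this.symm
      · have : w = σ v := by
          rcases (hadj v w).mp h with ⟨hs, _⟩ | hs
          · exact absurd (hs.mpr hw) hv
          · exact hs
        have hvw' : σ v = σ w' := by rw [← this, hww']
        have : v = w' := by
          calc v = σ (σ v) := (hσinv v).symm
          _ = σ (σ w') := by rw [hvw']
          _ = w' := hσinv w'
        exact G.ne_of_adj h' this
    · have hww' : w' = σ w := hlmix w' w hw' hw hl.symm
      by_cases hv : v ∈ A
      · have : w = σ v := by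
          rcases (hadj v w).mp h with ⟨hs, _⟩ | hs
          · exact absurd (hs.mp hv) hw
          · exact hs
        have : w' = v := by rw [hww', this, hσinv]
        exact G.ne_of_adj h' this.symm
      · have : w' = σ v := by
          rcases (hadj v w').mp h' with ⟨hs, _⟩ | hs
          · exact absurd (hs.mpr hw') hv
          · exact hs
        have hvw : σ v = σ w := by rw [← this, hww']
        have : v = w := by
          calc v = σ (σ v) := (hσinv v).symm
          _ = σ (σ w) := by rw [hvw]
          _ = w := hσinv w
        exact G.ne_of_adj h this
    · exact hne (hinjB w w' hw hw' hl)
  refine ⟨Sym2.lift ⟨fun v w => ((label v + label w : ZMod m)).val,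
    fun v w => by dsimp only; rw [add_comm]⟩, ?_, ?_⟩
  · intro v w _
    rw [Sym2.lift_mk]
    exact ZMod.val_lt _
  · intro v w w' h h' hne
    rw [Sym2.lift_mk, Sym2.lift_mk]
    intro hval
    dsimp only at hval
    have h2 : (label v + label w : ZMod m) = label v + label w' :=
      ZMod.val_injective m hval
    exact key v w w' h h' hne (add_left_cancel h2)

private lemma chrom_eq [Fintype V] (G : SimpleGraph V) [DecidableRel G.Adj] (k : ℕ)
    (hreg : G.IsRegularOfDegree k) (v₀ : V) (c : Sym2 V → ℕ)
    (hlt : ∀ ⦃v w⦄, G.Adj v w → c s(v, w) < k)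
    (hprop : ∀ ⦃v w w'⦄, G.Adj v w → G.Adj v w' → w ≠ w' → c s(v, w) ≠ c s(v, w')) :
    G.lineGraph.chromaticNumber = k := by
  classical
  have hbound : ∀ e : G.edgeSet, c e.1 < k := by
    rintro ⟨e, he⟩
    induction e with
    | _ x y => exact hlt (G.mem_edgeSet.mp he)
  have hedge : ∀ (e : G.edgeSet) (v : V), v ∈ (e : Sym2 V) →
      ∃ w, (e : Sym2 V) = s(v, w) ∧ G.Adj v w := by
    rintro ⟨e, he⟩ v hv
    obtain ⟨w, rfl⟩ := Sym2.mem_iff_exists.mp hv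
    exact ⟨w, rfl, G.mem_edgeSet.mp he⟩
  have hcol : G.lineGraph.Coloring (Fin k) := by
    refine Coloring.mk (fun e => ⟨c e.1, hbound e⟩) ?_
    rintro e₁ e₂ ⟨hne, v, hv₁, hv₂⟩
    obtain ⟨w, hw, haw⟩ := hedge e₁ v hv₁
    obtain ⟨w', hw', haw'⟩ := hedge e₂ v hv₂
    have hww' : w ≠ w' := by
      rintro rfl
      exact hne (Subtype.ext (hw.trans hw'.symm))
    intro hcontra
    have : c e₁.1 = c e₂.1 := congrArg Fin.val hcontra
    rw [hw, hw'] at this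
    exact hprop haw haw' hww' this
  have hub : G.lineGraph.chromaticNumber ≤ k := by
    have := hcol.colorable
    rw [Fintype.card_fin] at this
    exact this.chromaticNumber_le
  have hlb : (k : ℕ∞) ≤ G.lineGraph.chromaticNumber := by
    set s : Finset G.edgeSet := (G.neighborFinset v₀).attach.image
      (fun w : ↥(G.neighborFinset v₀) =>
        (⟨s(v₀, (w : V)), G.mem_edgeSet.mpr ((G.mem_neighborFinset v₀ (w : V)).mp w.2)⟩ :
        G.edgeSet)) with hs
    have hclique : G.lineGraph.IsClique ↑s := by
      intro e₁ he₁ e₂ he₂ hne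
      refine ⟨hne, v₀, ?_, ?_⟩
      · simp only [hs, Finset.coe_image, Set.mem_image, Finset.mem_coe] at he₁
        obtain ⟨w, _, rfl⟩ := he₁
        exact Sym2.mem_mk_left v₀ ↑w
      · simp only [hs, Finset.coe_image, Set.mem_image, Finset.mem_coe] at he₂
        obtain ⟨w, _, rfl⟩ := he₂
        exact Sym2.mem_mk_left v₀ ↑w
    have hcard : s.card = k := by
      rw [hs, Finset.card_image_of_injective, Finset.card_attach,
        card_neighborFinset_eq_degree, hreg]
      intro w w' hww'
      have := congrArg Subtype.val hww'
      simp only [Subtype.mk.injEq] at this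
      exact Subtype.ext (Sym2.congr_right.mp this)
    have := hclique.card_le_chromaticNumber
    rwa [hcard] at this
  exact le_antisymm hub hlb

end Auxiliary

/-- Lemma 2.2(ii): if a connected regular graph `G` of even order `n` has a partition of its
vertex set into two halves `V₁, V₂` of size `n/2` such that `V₁` is a clique or a coclique,
then `G` is class 1. -/
theorem stmt_3 {V : Type*} [Fintype V] (G : SimpleGraph V) [DecidableRel G.Adj] (k : ℕ)
    (hconn : G.Connected) (hreg : G.IsRegularOfDegree k)
    (heven : Even (Fintype.card V)) (V₁ : Set V)
    (hcard1 : Nat.card V₁ = Fintype.card V / 2)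
    (hcard2 : Nat.card ↥(V₁ᶜ) = Fintype.card V / 2)
    (hcc : G.IsClique V₁ ∨ V₁.Pairwise fun a b => ¬ G.Adj a b) :
    edgeChromaticNumber G = k := by
  classical
  have hV : Nonempty V := hconn.nonempty
  set n := Fintype.card V with hn
  set A := V₁.toFinset with hAdef
  have hA : ∀ v, v ∈ A ↔ v ∈ V₁ := fun v => Set.mem_toFinset
  have hAcard : A.card = n / 2 := by
    rw [← hcard1, Nat.card_coe_set_eq, Set.ncard_eq_toFinset_card']
  have h2A : 2 * A.card = n := by
    rw [hAcard]
    exact Nat.mul_div_cancel' heven.two_dvd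
  have hnpos : 0 < n := Fintype.card_pos
  have hmpos : 0 < A.card := by omega
  have hBcard : (Aᶜ : Finset V).card = A.card := by
    rw [Finset.card_compl]; omega
  have hAne : A.Nonempty := Finset.card_pos.mp hmpos
  have hBne : (Aᶜ : Finset V).Nonempty := Finset.card_pos.mp (by omega)
  set dA : V → ℕ := fun v => (G.neighborFinset v ∩ A).card with hdA
  set dB : V → ℕ := fun v => (G.neighborFinset v ∩ Aᶜ).card with hdB
  have hsplit : ∀ v, dA v + dB v = k := fun v => by
    rw [hdA, hdB]; rw [deg_split]; exact hreg v
  suffices hsuff : ∃ c : Sym2 V → ℕ, (∀ ⦃v w⦄, G.Adj v w → c s(v, w) < k) ∧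
      (∀ ⦃v w w'⦄, G.Adj v w → G.Adj v w' → w ≠ w' → c s(v, w) ≠ c s(v, w')) by
    obtain ⟨c, h1, h2⟩ := hsuff
    exact chrom_eq G k hreg (Classical.arbitrary V) c h1 h2
  rcases hcc with hcl | hco
  · -- clique case
    have hclA : ∀ a ∈ A, ∀ w ∈ A, a ≠ w → G.Adj a w := fun a ha w hw hne =>
      hcl ((hA a).mp ha) ((hA w).mp hw) hne
    have hNA : ∀ a ∈ A, G.neighborFinset a ∩ A = A.erase a := by
      intro a ha
      ext w
      rw [Finset.mem_inter, mem_neighborFinset, Finset.mem_erase]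
      constructor
      · rintro ⟨hadj, hw⟩
        exact ⟨(G.ne_of_adj hadj).symm, hw⟩
      · rintro ⟨hne, hw⟩
        exact ⟨hclA a ha w hw (Ne.symm hne), hw⟩
    have hdAa : ∀ a ∈ A, dA a + 1 = A.card := by
      intro a ha
      rw [hdA]
      dsimp only
      rw [hNA a ha]
      exact Finset.card_erase_add_one ha
    obtain ⟨a₀, ha₀⟩ := hAne
    set t := dB a₀ with htdef
    have hk : k = (A.card - 1) + t := by
      have h1 := hsplit a₀; have h2 := hdAa a₀ ha₀; omega
    have hdBa : ∀ a ∈ A, dB a = t := by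
      intro a ha
      have h1 := hsplit a; have h2 := hdAa a ha
      have h3 := hsplit a₀; have h4 := hdAa a₀ ha₀
      omega
    have hsum : ∑ b ∈ Aᶜ, dA b = (Aᶜ : Finset V).card * t := by
      rw [← cross_sum G A Aᶜ, Finset.sum_congr rfl hdBa, Finset.sum_const, smul_eq_mul, hBcard]
    have hsubB : ∀ b ∈ (Aᶜ : Finset V), G.neighborFinset b ∩ Aᶜ ⊆ (Aᶜ : Finset V).erase b := by
      intro b _ w hw
      rw [Finset.mem_erase]
      rw [Finset.mem_inter, mem_neighborFinset] at hw
      exact ⟨(G.ne_of_adj hw.1).symm, hw.2⟩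
    have hdBb_le : ∀ b ∈ (Aᶜ : Finset V), dB b + 1 ≤ A.card := by
      intro b hb
      have := Finset.card_le_card (hsubB b hb)
      rw [Finset.card_erase_of_mem hb, hBcard] at this
      have h3 : dB b = (G.neighborFinset b ∩ Aᶜ).card := rfl
      omega
    have hdAb : ∀ b ∈ (Aᶜ : Finset V), dA b = t := by
      apply sum_eq_all Aᶜ dA t ?_ hsum
      intro b hb
      have h1 := hsplit b; have h2 := hdBb_le b hb; omega
    have hdBb : ∀ b ∈ (Aᶜ : Finset V), dB b + 1 = A.card := by
      intro b hb; have h1 := hsplit b; have h2 := hdAb b hb; omega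
    have hNB : ∀ b ∈ (Aᶜ : Finset V), G.neighborFinset b ∩ Aᶜ = (Aᶜ : Finset V).erase b := by
      intro b hb
      apply Finset.eq_of_subset_of_card_le (hsubB b hb)
      rw [Finset.card_erase_of_mem hb, hBcard]
      have := hdBb b hb
      rw [hdB] at this
      dsimp only at this
      omega
    have hclB : ∀ b ∈ (Aᶜ : Finset V), ∀ w ∈ (Aᶜ : Finset V), b ≠ w → G.Adj b w := by
      intro b hb w hw hne
      have : w ∈ (Aᶜ : Finset V).erase b := Finset.mem_erase.mpr ⟨hne.symm, hw⟩
      rw [← hNB b hb] at this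
      exact (mem_neighborFinset _ _ _).mp (Finset.mem_inter.mp this).1
    have ht : 1 ≤ t := by
      by_contra hcon
      have ht0 : t = 0 := by omega
      have hnocross : ∀ v w, G.Adj v w → (v ∈ A ↔ w ∈ A) := by
        intro v w hadj
        constructor
        · intro hv
          by_contra hw
          have hmem : w ∈ G.neighborFinset v ∩ Aᶜ :=
            Finset.mem_inter.mpr ⟨(mem_neighborFinset _ _ _).mpr hadj, Finset.mem_compl.mpr hw⟩
          have hcard0 : (G.neighborFinset v ∩ Aᶜ).card = 0 := by
            have := hdBa v hv; rw [hdB] at this; dsimp only at this; omega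
          rw [Finset.card_eq_zero.mp hcard0] at hmem
          exact Finset.notMem_empty _ hmem
        · intro hw
          by_contra hv
          have hmem : v ∈ G.neighborFinset w ∩ Aᶜ :=
            Finset.mem_inter.mpr ⟨(mem_neighborFinset _ _ _).mpr hadj.symm,
              Finset.mem_compl.mpr hv⟩
          have hcard0 : (G.neighborFinset w ∩ Aᶜ).card = 0 := by
            have := hdBa w hw; rw [hdB] at this; dsimp only at this; omega
          rw [Finset.card_eq_zero.mp hcard0] at hmem
          exact Finset.notMem_empty _ hmem
      obtain ⟨b₀, hb₀⟩ := hBne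
      obtain ⟨p⟩ := hconn.preconnected a₀ b₀
      exact (Finset.mem_compl.mp hb₀) ((walk_side hnocross p).mp ha₀)
    obtain ⟨s, hs⟩ : ∃ s, t = s + 1 := ⟨t - 1, by omega⟩
    let Gcross : SimpleGraph V :=
      { Adj := fun v w => G.Adj v w ∧ ¬(v ∈ A ↔ w ∈ A)
        symm := Std.Symm.mk <| by intro v w ⟨h1, h2⟩; exact ⟨h1.symm, by tauto⟩
        loopless := ⟨fun v h => h.2 Iff.rfl⟩ }
    letI : DecidableRel Gcross.Adj := Classical.decRel _
    have hGcadj : ∀ v w, Gcross.Adj v w ↔ G.Adj v w ∧ ¬(v ∈ A ↔ w ∈ A) := fun _ _ => Iff.rfl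
    have hGcN : ∀ v, v ∈ A → Gcross.neighborFinset v = G.neighborFinset v ∩ Aᶜ := by
      intro v hv
      ext w
      rw [mem_neighborFinset, Finset.mem_inter, mem_neighborFinset, Finset.mem_compl, hGcadj]
      constructor
      · rintro ⟨h1, h2⟩; exact ⟨h1, fun hw => h2 (iff_of_true hv hw)⟩
      · rintro ⟨h1, h2⟩; exact ⟨h1, fun hiff => h2 (hiff.mp hv)⟩
    have hGcN' : ∀ v, v ∉ A → Gcross.neighborFinset v = G.neighborFinset v ∩ A := by
      intro v hv
      ext w
      rw [mem_neighborFinset, Finset.mem_inter, mem_neighborFinset, hGcadj]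
      constructor
      · rintro ⟨h1, h2⟩
        refine ⟨h1, ?_⟩
        by_contra hw
        exact h2 (iff_of_false hv hw)
      · rintro ⟨h1, h2⟩; exact ⟨h1, fun hiff => hv (hiff.mpr h2)⟩
    have hGcreg : ∀ v, Gcross.degree v = s + 1 := by
      intro v
      rw [← card_neighborFinset_eq_degree]
      by_cases hv : v ∈ A
      · rw [hGcN v hv, ← hs]
        have := hdBa v hv; rw [hdB] at this; exact this
      · rw [hGcN' v hv, ← hs]
        have := hdAb v (Finset.mem_compl.mpr hv); rw [hdA] at this; exact this
    have hGccross : ∀ v w, Gcross.Adj v w → (v ∈ A ↔ w ∉ A) := by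
      intro v w h
      have := h.2
      tauto
    obtain ⟨σ, hσinv, hσadj⟩ :=
      exists_matching Gcross A (s+1) (Nat.succ_pos s) hGccross h2A hGcreg
    have hσA : ∀ v, v ∈ A ↔ σ v ∉ A := fun v => hGccross v (σ v) (hσadj v)
    have hσG : ∀ v, G.Adj v (σ v) := fun v => (hσadj v).1
    have hσside : ∀ v, ¬(v ∈ A ↔ σ v ∈ A) := fun v => (hσadj v).2
    let GH : SimpleGraph V :=
      { Adj := fun v w => (((v ∈ A) ↔ (w ∈ A)) ∧ v ≠ w) ∨ w = σ v
        symm := Std.Symm.mk <| by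
          intro v w h
          rcases h with ⟨h1, h2⟩ | h1
          · exact Or.inl ⟨h1.symm, h2.symm⟩
          · right; rw [h1, hσinv]
        loopless := Std.Irrefl.mk <| by
          intro v h
          rcases h with ⟨_, h2⟩ | h2
          · exact h2 rfl
          · exact (hσside v) (by rw [← h2]) }
    have hGHadj : ∀ v w, GH.Adj v w ↔ (((v ∈ A) ↔ (w ∈ A)) ∧ v ≠ w) ∨ w = σ v :=
      fun _ _ => Iff.rfl
    have hGHsub : ∀ v w, GH.Adj v w → G.Adj v w := by
      intro v w h
      rcases h with ⟨h1, h2⟩ | h1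
      · by_cases hv : v ∈ A
        · exact hclA v hv w (h1.mp hv) h2
        · exact hclB v (Finset.mem_compl.mpr hv) w
            (Finset.mem_compl.mpr (fun hw => hv (h1.mpr hw))) h2
      · rw [h1]; exact hσG v
    obtain ⟨cH, hcHlt, hcHprop⟩ := pair_coloring GH A hmpos σ hσinv hσA hGHadj
    let GRem : SimpleGraph V :=
      { Adj := fun v w => Gcross.Adj v w ∧ w ≠ σ v
        symm := Std.Symm.mk <| by
          intro v w ⟨h1, h2⟩
          refine ⟨h1.symm, fun hv => h2 ?_⟩
          rw [hv, hσinv]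
        loopless := ⟨fun v h => Gcross.loopless.irrefl v h.1⟩ }
    letI : DecidableRel GRem.Adj := Classical.decRel _
    have hGRadj : ∀ v w, GRem.Adj v w ↔ Gcross.Adj v w ∧ w ≠ σ v := fun _ _ => Iff.rfl
    have hGRN : ∀ v, GRem.neighborFinset v = (Gcross.neighborFinset v).erase (σ v) := by
      intro v
      ext w
      rw [mem_neighborFinset, Finset.mem_erase, mem_neighborFinset, hGRadj]
      tauto
    have hGRreg : ∀ v, GRem.degree v = s := by
      intro v
      rw [← card_neighborFinset_eq_degree, hGRN,
        Finset.card_erase_of_mem ((Gcross.mem_neighborFinset v (σ v)).mpr (hσadj v)),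
        card_neighborFinset_eq_degree, hGcreg]
      omega
    obtain ⟨cR, hcRlt, hcRprop⟩ :=
      bip_coloring s GRem A (fun v w h => hGccross v w h.1) h2A hGRreg
    have hclassify : ∀ v w, G.Adj v w → ¬ GH.Adj v w → GRem.Adj v w := by
      intro v w hadj hnH
      by_cases hside : v ∈ A ↔ w ∈ A
      · exact absurd (Or.inl ⟨hside, G.ne_of_adj hadj⟩) hnH
      · exact ⟨⟨hadj, hside⟩, fun hw => hnH (Or.inr hw)⟩
    have hkms : k = A.card + s := by omega
    refine ⟨fun e => if e ∈ GH.edgeSet then cH e else cR e + A.card, ?_, ?_⟩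
    · intro v w hadj
      dsimp only
      by_cases hm : s(v, w) ∈ GH.edgeSet
      · rw [if_pos hm]
        have := hcHlt (GH.mem_edgeSet.mp hm)
        omega
      · rw [if_neg hm]
        have := hcRlt (hclassify v w hadj (fun h => hm (GH.mem_edgeSet.mpr h)))
        omega
    · intro v w w' h h' hne
      dsimp only
      by_cases hm : s(v, w) ∈ GH.edgeSet <;> by_cases hm' : s(v, w') ∈ GH.edgeSet
      · rw [if_pos hm, if_pos hm']
        exact hcHprop (GH.mem_edgeSet.mp hm) (GH.mem_edgeSet.mp hm') hne
      · rw [if_pos hm, if_neg hm']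
        have := hcHlt (GH.mem_edgeSet.mp hm)
        omega
      · rw [if_neg hm, if_pos hm']
        have := hcHlt (GH.mem_edgeSet.mp hm')
        omega
      · rw [if_neg hm, if_neg hm']
        have h1 := hclassify v w h (fun hh => hm (GH.mem_edgeSet.mpr hh))
        have h2 := hclassify v w' h' (fun hh => hm' (GH.mem_edgeSet.mpr hh))
        have := hcRprop h1 h2 hne
        omega
  · -- coclique case
    have hNA : ∀ a ∈ A, G.neighborFinset a ∩ A = ∅ := by
      intro a ha
      rw [Finset.eq_empty_iff_forall_notMem]
      intro w hw
      rw [Finset.mem_inter, mem_neighborFinset] at hw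
      obtain ⟨hadj, hwA⟩ := hw
      rcases eq_or_ne a w with rfl | hne
      · exact G.loopless.irrefl a hadj
      · exact hco ((hA a).mp ha) ((hA w).mp hwA) hne hadj
    have hdBa : ∀ a ∈ A, dB a = k := by
      intro a ha
      have h1 := hsplit a
      have h2 : dA a = 0 := by
        rw [hdA]; dsimp only; rw [hNA a ha]; exact Finset.card_empty
      omega
    have hsum : ∑ b ∈ Aᶜ, dA b = (Aᶜ : Finset V).card * k := by
      rw [← cross_sum G A Aᶜ, Finset.sum_congr rfl hdBa, Finset.sum_const, smul_eq_mul, hBcard]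
    have hdAb : ∀ b ∈ (Aᶜ : Finset V), dA b = k := by
      apply sum_eq_all_le Aᶜ dA k ?_ hsum
      intro b _
      have h1 := hsplit b
      omega
    have hNB : ∀ b ∈ (Aᶜ : Finset V), G.neighborFinset b ∩ Aᶜ = ∅ := by
      intro b hb
      apply Finset.card_eq_zero.mp
      have h1 := hsplit b
      have h2 := hdAb b hb
      have h3 : dB b = (G.neighborFinset b ∩ Aᶜ).card := rfl
      omega
    have hcross : ∀ v w, G.Adj v w → (v ∈ A ↔ w ∉ A) := by
      intro v w hadj
      constructor
      · intro hv hw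
        have hmem : w ∈ G.neighborFinset v ∩ A :=
          Finset.mem_inter.mpr ⟨(mem_neighborFinset _ _ _).mpr hadj, hw⟩
        rw [hNA v hv] at hmem
        exact Finset.notMem_empty w hmem
      · intro hw
        by_contra hv
        have hmem : w ∈ G.neighborFinset v ∩ Aᶜ :=
          Finset.mem_inter.mpr ⟨(mem_neighborFinset _ _ _).mpr hadj, Finset.mem_compl.mpr hw⟩
        rw [hNB v (Finset.mem_compl.mpr hv)] at hmem
        exact Finset.notMem_empty w hmem
    exact bip_coloring k G A hcross h2A hreg
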